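/- (S-procedure characterization of ellipsoid containment) Let x̄₀, xᵢ ∈ ℝⁿ and let P̄₀, Pᵢ be symmetric positive definite n×n matrices. Then E(x̄₀, P̄₀) ⊆ E(xᵢ, Pᵢ) if and only if there exists a scalar τᵢ ≥ 0 such that for all x ∈ ℝⁿ, (x−xᵢ)ᵀPᵢ⁻¹(x−xᵢ) − τᵢ(x−x̄₀)ᵀP̄₀⁻¹(x−x̄₀) ≤ 1 − τᵢ. -/

import Mathlib

open Matrix

lemma quadRoots (a B C : ℝ) (ha : 0 < a) (hdisc : 0 ≤ B^2 - 4*a*C) :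
    ∃ t₁ t₂ : ℝ, t₁ ≤ t₂ ∧ ∀ t : ℝ, a*t^2 + B*t + C = a*(t - t₁)*(t - t₂) := by
  set q := Real.sqrt (B^2 - 4*a*C) with hq
  have hq2 : q^2 = B^2 - 4*a*C := Real.sq_sqrt hdisc
  have hqnn : 0 ≤ q := Real.sqrt_nonneg _
  have ha' : a ≠ 0 := ne_of_gt ha
  refine ⟨(-B - q)/(2*a), (-B + q)/(2*a), ?_, ?_⟩
  · apply div_le_div_of_nonneg_right (by linarith) (by linarith)
  · intro t
    field_simp
    ring_nf
    linear_combination hq2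

lemma oneD (a b B B' C C' : ℝ) (ha : 0 < a) (hb : 0 < b)
    (himp : ∀ t : ℝ, a*t^2 + B*t + C ≤ 0 → b*t^2 + B'*t + C' ≤ 0)
    (h0 : C < 0) (h1 : 0 < a + B + C) :
    (b + B' + C') * (-C) ≤ (-C') * (a + B + C) := by
  have hC' : C' ≤ 0 := by have := himp 0 (by nlinarith); nlinarith
  by_cases hG1 : b + B' + C' ≤ 0
  · have h2 : 0 ≤ (-C') * (a+B+C) := mul_nonneg (by linarith) h1.le
    nlinarith
  push_neg at hG1
  obtain ⟨t₁, t₂, ht12, hfact⟩ := quadRoots a B C ha (by nlinarith [sq_nonneg B])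
  have hprod : a * (t₁ * t₂) = C := by linear_combination -(hfact 0)
  have ht₁ : t₁ < 0 := by
    by_contra h; push_neg at h
    have h2 : (0:ℝ) ≤ t₂ := le_trans h ht12
    nlinarith [mul_nonneg h h2]
  have ht₂ : 0 < t₂ := by
    by_contra h; push_neg at h
    nlinarith [mul_nonneg (neg_nonneg.mpr ht₁.le) (neg_nonneg.mpr h)]
  have hF1 : a + B + C = a*(1-t₁)*(1-t₂) := by linear_combination hfact 1
  have ht₂1 : t₂ < 1 := by
    by_contra h; push_neg at h
    nlinarith [mul_nonneg (by linarith : (0:ℝ) ≤ 1 - t₁) (by linarith : (0:ℝ) ≤ t₂ - 1)]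
  have hψ1 : b*t₁^2 + B'*t₁ + C' ≤ 0 := himp t₁ (by rw [hfact]; nlinarith)
  have hψ2 : b*t₂^2 + B'*t₂ + C' ≤ 0 := himp t₂ (by rw [hfact]; nlinarith)
  obtain ⟨s₁, s₂, hs12, hfactg⟩ := quadRoots b B' C' hb (by nlinarith [sq_nonneg (2*b*t₁ + B')])
  have hg1 : b*(t₁ - s₁)*(t₁ - s₂) ≤ 0 := by rw [← hfactg]; exact hψ1
  have hg2 : b*(t₂ - s₁)*(t₂ - s₂) ≤ 0 := by rw [← hfactg]; exact hψ2
  have hs₁ : s₁ ≤ t₁ := by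
    by_contra h; push_neg at h
    nlinarith [mul_pos (by linarith : (0:ℝ) < s₁ - t₁) (by linarith : (0:ℝ) < s₂ - t₁)]
  have hs₂ : t₂ ≤ s₂ := by
    by_contra h; push_neg at h
    nlinarith [mul_pos (by linarith : (0:ℝ) < t₂ - s₁) (by linarith : (0:ℝ) < t₂ - s₂)]
  have hG1' : b + B' + C' = b*(1-s₁)*(1-s₂) := by linear_combination hfactg 1
  have hs₂1 : s₂ < 1 := by
    by_contra h; push_neg at h
    nlinarith [mul_nonneg (by linarith : (0:ℝ) ≤ 1 - s₁) (by linarith : (0:ℝ) ≤ s₂ - 1)]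
  have hprodg : b * (s₁ * s₂) = C' := by linear_combination -(hfactg 0)
  have K1 : (1-s₁)*(-t₁) ≤ (-s₁)*(1-t₁) := by nlinarith
  have K2 : (1-s₂)*t₂ ≤ s₂*(1-t₂) := by nlinarith
  have P : ((1-s₁)*(-t₁)) * ((1-s₂)*t₂) ≤ ((-s₁)*(1-t₁)) * (s₂*(1-t₂)) :=
    mul_le_mul K1 K2 (mul_nonneg (by linarith) ht₂.le)
      (mul_nonneg (by linarith) (by linarith))
  have final := mul_le_mul_of_nonneg_left P (by positivity : (0:ℝ) ≤ a*b)
  calc (b + B' + C') * (-C) = (a*b) * (((1-s₁)*(-t₁)) * ((1-s₂)*t₂)) := by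
        rw [hG1']; linear_combination (b*(1-s₁)*(1-s₂)) * hprod
    _ ≤ (a*b) * (((-s₁)*(1-t₁)) * (s₂*(1-t₂))) := final
    _ = (-C') * (a + B + C) := by
        rw [hF1]; linear_combination -(a*(1-t₁)*(1-t₂)) * hprodg

lemma quad_expand {n : ℕ} (Q : Matrix (Fin n) (Fin n) ℝ) (u d : Fin n → ℝ) (t : ℝ) :
    (u + t • d) ⬝ᵥ (Q *ᵥ (u + t • d)) =
      (d ⬝ᵥ (Q *ᵥ d)) * t^2 + (u ⬝ᵥ (Q *ᵥ d) + d ⬝ᵥ (Q *ᵥ u)) * t + u ⬝ᵥ (Q *ᵥ u) := by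
  simp only [mulVec_add, mulVec_smul, dotProduct_add, add_dotProduct, dotProduct_smul,
    smul_dotProduct, smul_eq_mul]
  ring

lemma posdef_quad_pos {n : ℕ} {Q : Matrix (Fin n) (Fin n) ℝ} (hQ : Q.PosDef)
    {d : Fin n → ℝ} (hd : d ≠ 0) : 0 < d ⬝ᵥ (Q *ᵥ d) := by
  have := hQ.dotProduct_mulVec_pos hd
  simpa using this

/-- (S-procedure characterization of ellipsoid containment) `E(x̄₀, P̄₀) ⊆ E(xᵢ, Pᵢ)` holds if
and only if there is `τᵢ ≥ 0` such that for all `x`,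
`(x-xᵢ)ᵀPᵢ⁻¹(x-xᵢ) - τᵢ(x-x̄₀)ᵀP̄₀⁻¹(x-x̄₀) ≤ 1 - τᵢ`. -/
theorem ellipsoid_containment_iff_s_procedure (n : ℕ) (hn : 0 < n)
    (xbar xi : Fin n → ℝ) (Pbar Pi : Matrix (Fin n) (Fin n) ℝ)
    (hPbar : Pbar.PosDef) (hPi : Pi.PosDef) :
    ({x : Fin n → ℝ | (x - xbar) ⬝ᵥ (Pbar⁻¹ *ᵥ (x - xbar)) ≤ 1} ⊆
        {x : Fin n → ℝ | (x - xi) ⬝ᵥ (Pi⁻¹ *ᵥ (x - xi)) ≤ 1}) ↔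
      ∃ τ : ℝ, 0 ≤ τ ∧ ∀ x : Fin n → ℝ,
        (x - xi) ⬝ᵥ (Pi⁻¹ *ᵥ (x - xi)) - τ * ((x - xbar) ⬝ᵥ (Pbar⁻¹ *ᵥ (x - xbar)))
          ≤ 1 - τ := by
  have hQ0 : (Pbar⁻¹).PosDef := hPbar.inv
  have hQ1 : (Pi⁻¹).PosDef := hPi.inv
  set f : (Fin n → ℝ) → ℝ := fun z => (z - xbar) ⬝ᵥ (Pbar⁻¹ *ᵥ (z - xbar)) with hf
  set g : (Fin n → ℝ) → ℝ := fun z => (z - xi) ⬝ᵥ (Pi⁻¹ *ᵥ (z - xi)) with hg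
  constructor
  · intro hsub
    have hsub' : ∀ z, f z ≤ 1 → g z ≤ 1 := fun z hz => hsub hz
    have hfxbar : f xbar = 0 := by simp [hf]
    set S : Set ℝ := {r : ℝ | ∃ y, f y < 1 ∧ r = (1 - g y)/(1 - f y)} with hS
    have hne : S.Nonempty := ⟨(1 - g xbar)/(1 - f xbar), xbar, by rw [hfxbar]; norm_num, rfl⟩
    have hlb : ∀ r ∈ S, (0:ℝ) ≤ r := by
      rintro r ⟨y, hy, rfl⟩
      have hgy : g y ≤ 1 := hsub' y hy.le
      exact div_nonneg (by linarith) (by linarith)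
    have hbdd : BddBelow S := ⟨0, hlb⟩
    set τ := sInf S with hτ
    have hτ0 : 0 ≤ τ := le_csInf hne hlb
    refine ⟨τ, hτ0, ?_⟩
    intro x
    have key : g x - 1 ≤ τ * (f x - 1) → g x - τ * f x ≤ 1 - τ := by intro h; linarith
    apply key
    rcases lt_trichotomy (f x) 1 with h | h | h
    · have hτle : τ ≤ (1 - g x)/(1 - f x) := csInf_le hbdd ⟨x, h, rfl⟩
      have h2 : τ * (1 - f x) ≤ 1 - g x := by
        rw [← le_div_iff₀ (by linarith : (0:ℝ) < 1 - f x)]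
        exact hτle
      linarith
    · have hgx : g x ≤ 1 := hsub' x h.le
      rw [h]; simp; linarith
    · -- cross inequality
      have hcross : ∀ r ∈ S, (g x - 1)/(f x - 1) ≤ r := by
        rintro r ⟨y, hy, rfl⟩
        rw [div_le_div_iff₀ (by linarith) (by linarith)]
        -- reduce to oneD along the line from y to x
        have hxy : x ≠ y := by
          intro hxyeq; rw [hxyeq] at h; linarith
        set d : Fin n → ℝ := x - y with hd
        have hdne : d ≠ 0 := sub_ne_zero.mpr hxy
        set a : ℝ := d ⬝ᵥ (Pbar⁻¹ *ᵥ d) with ha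
        set b : ℝ := d ⬝ᵥ (Pi⁻¹ *ᵥ d) with hb
        have hapos : 0 < a := posdef_quad_pos hQ0 hdne
        have hbpos : 0 < b := posdef_quad_pos hQ1 hdne
        set u : Fin n → ℝ := y - xbar with hu
        set v : Fin n → ℝ := y - xi with hv
        set B : ℝ := u ⬝ᵥ (Pbar⁻¹ *ᵥ d) + d ⬝ᵥ (Pbar⁻¹ *ᵥ u) with hB
        set B' : ℝ := v ⬝ᵥ (Pi⁻¹ *ᵥ d) + d ⬝ᵥ (Pi⁻¹ *ᵥ v) with hB'
        have hfz : ∀ t : ℝ, f (y + t • d) = a * t^2 + B * t + f y := by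
          intro t
          have h1 : (y + t • d) - xbar = u + t • d := by rw [hu]; abel
          rw [hf]; simp only [h1]
          rw [quad_expand]
        have hgz : ∀ t : ℝ, g (y + t • d) = b * t^2 + B' * t + g y := by
          intro t
          have h1 : (y + t • d) - xi = v + t • d := by rw [hv]; abel
          rw [hg]; simp only [h1]
          rw [quad_expand]
        have hx1 : y + (1:ℝ) • d = x := by rw [hd]; simp
        have hfx : f x = a + B + f y := by
          have := hfz 1; rw [hx1] at this; linarith [this]
        have hgx : g x = b + B' + g y := by
          have := hgz 1; rw [hx1] at this; linarith [this]
        have hone := oneD a b B B' (f y - 1) (g y - 1) hapos hbpos ?_ (by linarith) (by linarith)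
        · have e1 : b + B' + (g y - 1) = g x - 1 := by linarith
          have e2 : a + B + (f y - 1) = f x - 1 := by linarith
          rw [e1, e2] at hone
          ring_nf at hone ⊢
          linarith
        · intro t ht
          have hft : f (y + t • d) ≤ 1 := by rw [hfz t]; linarith
          have hgt := hsub' _ hft
          rw [hgz t] at hgt; linarith
      have hge : (g x - 1)/(f x - 1) ≤ τ := le_csInf hne hcross
      have h2 : g x - 1 ≤ τ * (f x - 1) := by
        rw [← div_le_iff₀ (by linarith : (0:ℝ) < f x - 1)] at *
        exact hge
      exact h2
  · rintro ⟨τ, hτ0, hτ⟩ x hx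
    have h1 := hτ x
    have h2 : f x ≤ 1 := hx
    simp only [Set.mem_setOf_eq] at *
    nlinarith
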